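/- arXiv:1301.6596 — 2 statements merged into one kernel-verified Lean document; each statement's English description precedes it below -/
import Mathlib

section
/- Let Ω₁ and Ω₂ be finite sets of real numbers and let a, b : ℝ → ℂ be coefficient functions. For the trigonometric polynomials x(t) = Σ_{ω ∈ Ω₁} a(ω) e^{iωt} and y(t) = Σ_{ν ∈ Ω₂} b(ν) e^{iνt}, the averaged integral (1/(2T)) ∫_{-T}^{T} x(t) · conj(y(t)) dt tends, as T → ∞, to Σ_{ω ∈ Ω₁ ∩ Ω₂} a(ω) · conj(b(ω)). -/
open Filter MeasureTheory intervalIntegral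

lemma key_mean (μ : ℝ) :
    Tendsto (fun T : ℝ => (1 / (2 * (T : ℂ))) * ∫ t in (-T)..T, Complex.exp (Complex.I * μ * t))
      atTop (nhds (if μ = 0 then 1 else 0)) := by
  rcases eq_or_ne μ 0 with h | h
  · simp only [h, if_pos rfl]
    apply Tendsto.congr' (f₁ := fun _ : ℝ => (1:ℂ)) _ tendsto_const_nhds
    filter_upwards [eventually_gt_atTop 0] with T hT
    have hT' : (T:ℂ) ≠ 0 := by exact_mod_cast ne_of_gt hT
    simp only [Complex.ofReal_zero, mul_zero, zero_mul, Complex.exp_zero,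
      intervalIntegral.integral_const, smul_eq_mul, mul_one, sub_neg_eq_add]

    field_simp
    rw [Complex.real_smul, Complex.ofReal_mul]; push_cast; ring
  · rw [if_neg h]
    have hc : (Complex.I * μ) ≠ 0 := by
      simp [Complex.I_ne_zero, Complex.ofReal_eq_zero, h]
    apply squeeze_zero_norm' (a := fun T : ℝ => 1 / (T * |μ|))
    · filter_upwards [eventually_gt_atTop 0] with T hT
      have hint : (∫ t in (-T)..T, Complex.exp (Complex.I * μ * t)) =
          (Complex.exp (Complex.I * μ * T) - Complex.exp (Complex.I * μ * (-T:ℝ))) / (Complex.I * μ) := by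
        simpa using integral_exp_mul_complex (a := -T) (b := T) hc
      rw [hint]
      have h1 : ∀ s : ℝ, ‖Complex.exp (Complex.I * μ * s)‖ = 1 := by
        intro s
        rw [Complex.norm_exp]
        have : (Complex.I * μ * s).re = 0 := by simp
        rw [this, Real.exp_zero]
      have h1' := h1 (-T)
      have hnum : ‖Complex.exp (Complex.I * μ * T) - Complex.exp (Complex.I * μ * ((-T:ℝ):ℂ))‖ ≤ 2 := by
        calc ‖Complex.exp (Complex.I * μ * T) - Complex.exp (Complex.I * μ * ((-T:ℝ):ℂ))‖
            ≤ ‖Complex.exp (Complex.I * μ * T)‖ + ‖Complex.exp (Complex.I * μ * ((-T:ℝ):ℂ))‖ :=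
              norm_sub_le _ _
          _ = 2 := by rw [h1 T, h1']; norm_num
      have hden : ‖(Complex.I * (μ:ℂ))‖ = |μ| := by
        simp [Complex.norm_real]
      rw [norm_mul]
      have h2T : ‖(1 : ℂ) / (2 * (T : ℂ))‖ = 1 / (2 * T) := by
        rw [norm_div, norm_mul]
        simp [Complex.norm_real, abs_of_pos hT]
      rw [h2T, norm_div, hden]
      have hμ : 0 < |μ| := abs_pos.mpr h
      calc 1 / (2 * T) * (‖Complex.exp (Complex.I * ↑μ * ↑T) - Complex.exp (Complex.I * ↑μ * ((-T:ℝ):ℂ))‖ / |μ|)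
          ≤ 1 / (2 * T) * (2 / |μ|) := by
            apply mul_le_mul_of_nonneg_left _ (by positivity)
            exact div_le_div_of_nonneg_right hnum hμ.le
        _ = 1 / (T * |μ|) := by field_simp
    · have h2 : Tendsto (fun T : ℝ => T * |μ|) atTop atTop :=
        Tendsto.atTop_mul_const (abs_pos.mpr h) tendsto_id
      exact (tendsto_inv_atTop_zero.comp h2).congr fun T => (one_div _).symm

set_option maxHeartbeats 1000000 in
/-- For trigonometric polynomials `x(t) = Σ_{ω ∈ Ω₁} a(ω) e^{iωt}` and
`y(t) = Σ_{ν ∈ Ω₂} b(ν) e^{iνt}`, the averaged integral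
`(1/(2T)) ∫_{-T}^{T} x(t) ⬝ conj(y(t)) dt` tends, as `T → ∞`, to
`Σ_{ω ∈ Ω₁ ∩ Ω₂} a(ω) ⬝ conj(b(ω))`. -/
theorem besicovitch_inner_trigPoly (Ω₁ Ω₂ : Finset ℝ) (a b : ℝ → ℂ) :
    Tendsto
      (fun T : ℝ => (1 / (2 * (T : ℂ))) *
        ∫ t in (-T)..T,
          (∑ ω ∈ Ω₁, a ω * Complex.exp (Complex.I * ω * t)) *
            starRingEnd ℂ (∑ ν ∈ Ω₂, b ν * Complex.exp (Complex.I * ν * t)))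
      atTop (nhds (∑ ω ∈ Ω₁ ∩ Ω₂, a ω * starRingEnd ℂ (b ω))) := by
  have hcont : ∀ (c : ℂ) (μ : ℝ), Continuous fun t : ℝ => c * Complex.exp (Complex.I * μ * t) := by
    intro c μ
    exact continuous_const.mul (Complex.continuous_exp.comp (by continuity))
  have hfun : ∀ T : ℝ, (1 / (2 * (T : ℂ))) *
      (∫ t in (-T)..T,
        (∑ ω ∈ Ω₁, a ω * Complex.exp (Complex.I * ω * t)) *
          starRingEnd ℂ (∑ ν ∈ Ω₂, b ν * Complex.exp (Complex.I * ν * t))) =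
      ∑ ω ∈ Ω₁, ∑ ν ∈ Ω₂, (a ω * starRingEnd ℂ (b ν)) *
        ((1 / (2 * (T : ℂ))) * ∫ t in (-T)..T, Complex.exp (Complex.I * ((ω - ν : ℝ)) * t)) := by
    intro T
    have hint : ∀ t : ℝ,
        (∑ ω ∈ Ω₁, a ω * Complex.exp (Complex.I * ω * t)) *
          starRingEnd ℂ (∑ ν ∈ Ω₂, b ν * Complex.exp (Complex.I * ν * t)) =
        ∑ ω ∈ Ω₁, ∑ ν ∈ Ω₂, (a ω * starRingEnd ℂ (b ν)) *
          Complex.exp (Complex.I * ((ω - ν : ℝ)) * t) := by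
      intro t
      rw [map_sum, Finset.sum_mul_sum]
      refine Finset.sum_congr rfl fun ω _ => Finset.sum_congr rfl fun ν _ => ?_
      rw [map_mul]
      have hconj : (starRingEnd ℂ) (Complex.exp (Complex.I * ν * t)) =
          Complex.exp (-(Complex.I * ν * t)) := by
        rw [← Complex.exp_conj]
        congr 1
        simp [Complex.conj_I]
      rw [hconj, mul_mul_mul_comm, ← Complex.exp_add]
      congr 2
      push_cast
      ring
    rw [intervalIntegral.integral_congr (fun t _ => hint t)]
    have hI : ∀ ω ∈ Ω₁, IntervalIntegrable (fun t : ℝ => ∑ ν ∈ Ω₂,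
        a ω * (starRingEnd ℂ) (b ν) * Complex.exp (Complex.I * ((ω - ν : ℝ)) * t))
        MeasureTheory.volume (-T) T := by
      intro ω _
      apply Continuous.intervalIntegrable
      exact continuous_finset_sum _ fun ν _ => hcont _ _
    rw [intervalIntegral.integral_finset_sum hI]
    rw [Finset.mul_sum]
    refine Finset.sum_congr rfl fun ω _ => ?_
    have hI2 : ∀ ν ∈ Ω₂, IntervalIntegrable (fun t : ℝ =>
        a ω * (starRingEnd ℂ) (b ν) * Complex.exp (Complex.I * ((ω - ν : ℝ)) * t))
        MeasureTheory.volume (-T) T :=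
      fun ν _ => ((hcont _ _).intervalIntegrable _ _)
    rw [intervalIntegral.integral_finset_sum hI2, Finset.mul_sum]
    refine Finset.sum_congr rfl fun ν _ => ?_
    rw [intervalIntegral.integral_const_mul]
    ring
  have hlim : ∀ ω ν : ℝ, Tendsto (fun T : ℝ => (1 / (2 * (T : ℂ))) *
      ∫ t in (-T)..T, Complex.exp (Complex.I * ((ω - ν : ℝ)) * t)) atTop
      (nhds (if ν = ω then 1 else 0)) := by
    intro ω ν
    have := key_mean (ω - ν)
    simpa [sub_eq_zero, eq_comm] using this
  have main : Tendsto (fun T : ℝ => ∑ ω ∈ Ω₁, ∑ ν ∈ Ω₂, (a ω * starRingEnd ℂ (b ν)) *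
      ((1 / (2 * (T : ℂ))) * ∫ t in (-T)..T, Complex.exp (Complex.I * ((ω - ν : ℝ)) * t)))
      atTop (nhds (∑ ω ∈ Ω₁, ∑ ν ∈ Ω₂, (a ω * starRingEnd ℂ (b ν)) *
        (if ν = ω then 1 else 0))) :=
    tendsto_finset_sum _ fun ω _ => tendsto_finset_sum _ fun ν _ => (hlim ω ν).const_mul _
  have hsum : (∑ ω ∈ Ω₁, ∑ ν ∈ Ω₂, (a ω * starRingEnd ℂ (b ν)) * (if ν = ω then 1 else 0)) =
      ∑ ω ∈ Ω₁ ∩ Ω₂, a ω * starRingEnd ℂ (b ω) := by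
    rw [← Finset.sum_ite_mem]
    refine Finset.sum_congr rfl fun ω _ => ?_
    rw [← Finset.sum_ite_eq' Ω₂ ω (fun ν => a ω * starRingEnd ℂ (b ν))]
    refine Finset.sum_congr rfl fun ν _ => ?_
    by_cases h : ν = ω <;> simp [h]
  rw [← hsum]
  exact main.congr fun T => (hfun T).symm
end

section
/- Let Ω₁ and Ω₂ be finite sets of real numbers. Suppose that for every pair of coefficient functions a, b : ℝ → ℂ the trigonometric polynomials x(t) = Σ_{ω ∈ Ω₁} a(ω) e^{iωt} and y(t) = Σ_{ν ∈ Ω₂} b(ν) e^{iνt} are orthogonal in the Besicovitch sense, i.e. (1/(2T)) ∫_{-T}^{T} x(t) · conj(y(t)) dt tends to 0 as T → ∞. Then Ω₁ ∩ Ω₂ = ∅. -/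
open Filter MeasureTheory intervalIntegral

/-- Theorem 1 of the paper: if for every pair of coefficient functions the
trigonometric polynomials built on the finite frequency sets `Ω₁` and `Ω₂` are orthogonal
in the Besicovitch sense, then `Ω₁ ∩ Ω₂ = ∅`. -/
theorem besicovitch_orthogonal_imp_disjoint_freq (Ω₁ Ω₂ : Finset ℝ)
    (h : ∀ a b : ℝ → ℂ,
      Tendsto
        (fun T : ℝ => (1 / (2 * (T : ℂ))) *
          ∫ t in (-T)..T,
            (∑ ω ∈ Ω₁, a ω * Complex.exp (Complex.I * ω * t)) *
              starRingEnd ℂ (∑ ν ∈ Ω₂, b ν * Complex.exp (Complex.I * ν * t)))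
        atTop (nhds 0)) :
    Ω₁ ∩ Ω₂ = ∅ := by
  by_contra hne
  obtain ⟨ω, hω⟩ := Finset.nonempty_iff_ne_empty.mpr hne
  rw [Finset.mem_inter] at hω
  set a : ℝ → ℂ := fun x => if x = ω then 1 else 0 with ha
  have h1 := h a a
  have key : ∀ᶠ T : ℝ in atTop,
      (1 / (2 * (T : ℂ))) *
          ∫ t in (-T)..T,
            (∑ ω' ∈ Ω₁, a ω' * Complex.exp (Complex.I * ω' * t)) *
              starRingEnd ℂ (∑ ν ∈ Ω₂, a ν * Complex.exp (Complex.I * ν * t)) = 1 := by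
    filter_upwards [eventually_gt_atTop (0 : ℝ)] with T hT
    have hsum : ∀ (s : Finset ℝ), ω ∈ s → ∀ t : ℝ,
        (∑ ω' ∈ s, a ω' * Complex.exp (Complex.I * ω' * t))
          = Complex.exp (Complex.I * ω * t) := by
      intro s hs t
      rw [Finset.sum_eq_single ω]
      · simp [ha]
      · intro b _ hb; simp [ha, hb]
      · intro hns; exact absurd hs hns
    have hint : ∀ t : ℝ,
        (∑ ω' ∈ Ω₁, a ω' * Complex.exp (Complex.I * ω' * t)) *
          starRingEnd ℂ (∑ ν ∈ Ω₂, a ν * Complex.exp (Complex.I * ν * t)) = 1 := by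
      intro t
      rw [hsum Ω₁ hω.1 t, hsum Ω₂ hω.2 t, ← Complex.exp_conj, ← Complex.exp_add]
      have : (starRingEnd ℂ) (Complex.I * ω * t) = -(Complex.I * ω * t) := by
        simp [map_mul, Complex.conj_I, Complex.conj_ofReal]
      rw [this]
      simp
    simp only [hint, intervalIntegral.integral_const, smul_eq_mul, mul_one]
    have h2T : (2 * (T : ℂ)) ≠ 0 := by
      simp [Complex.ofReal_ne_zero, hT.ne']
    field_simp
    have hT' : (T : ℂ) ≠ 0 := by exact_mod_cast hT.ne'
    rw [Complex.real_smul]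
    push_cast
    field_simp
    norm_num
  rw [tendsto_congr' key] at h1
  have := tendsto_nhds_unique h1 tendsto_const_nhds
  exact one_ne_zero this.symm
end
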